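/- arXiv:1807.05255 — 2 statements merged into one kernel-verified Lean document; each statement's English description precedes it below -/
import Mathlib

section
/- For nonnegative integers n and M with M ≥ 1, ∫_{-1/2}^{1/2} (sin((M+1)πx)/sin(πx))² · U_n(cos 2πx) · sin²(2πx) dx equals 1 if 0 ≤ n < M, equals 1/2 if n = M, and equals 0 if n > M. -/
open Real intervalIntegral

/-- Chebyshev polynomials of the second kind, as real functions. -/
noncomputable def chebU : ℕ → ℝ → ℝ
  | 0, _ => 1
  | 1, x => 2 * x
  | (n + 2), x => 2 * x * chebU (n + 1) x - chebU n x

lemma chebU_sin : ∀ (n : ℕ) (θ : ℝ),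
    chebU n (Real.cos θ) * Real.sin θ = Real.sin (((n : ℝ) + 1) * θ)
  | 0, θ => by simp [chebU]
  | 1, θ => by
      simp only [chebU]
      rw [show ((1:ℕ):ℝ) + 1 = 2 by norm_num, Real.sin_two_mul]; ring
  | (n + 2), θ => by
      have h1 := chebU_sin (n + 1) θ
      have h2 := chebU_sin n θ
      simp only [chebU]
      push_cast at h1 h2 ⊢
      have e1 : ((n:ℝ) + 2 + 1) * θ = ((n:ℝ) + 2) * θ + θ := by ring
      have e2 : ((n:ℝ) + 1 + 1) * θ = ((n:ℝ) + 2) * θ := by ring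
      have e3 : ((n:ℝ) + 1) * θ = ((n:ℝ) + 2) * θ - θ := by ring
      rw [e1, Real.sin_add]
      rw [e2] at h1
      rw [e3, Real.sin_sub] at h2
      linear_combination 2 * Real.cos θ * h1 - h2

lemma sin_mul_eq_zero {θ : ℝ} (h : Real.sin θ = 0) (c : ℤ) : Real.sin ((c : ℝ) * θ) = 0 := by
  rcases Real.sin_eq_zero_iff.1 h with ⟨k, hk⟩
  rw [← hk, show (c : ℝ) * ((k : ℝ) * π) = ((c * k : ℤ) : ℝ) * π by push_cast; ring]
  exact Real.sin_int_mul_pi _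

lemma telescope (M : ℕ) (θ : ℝ) :
    Real.sin (((M : ℝ) + 2) * θ) * chebU (M + 1) (Real.cos θ)
      - Real.sin (((M : ℝ) + 1) * θ) * chebU M (Real.cos θ)
      = Real.sin ((2 * (M : ℝ) + 3) * θ) := by
  by_cases h : Real.sin θ = 0
  · have a1 : Real.sin (((M : ℝ) + 2) * θ) = 0 := by
      rw [show ((M:ℝ)+2) = (((M:ℤ)+2 : ℤ) : ℝ) by push_cast; ring]
      exact sin_mul_eq_zero h _
    have a2 : Real.sin (((M : ℝ) + 1) * θ) = 0 := by
      rw [show ((M:ℝ)+1) = (((M:ℤ)+1 : ℤ) : ℝ) by push_cast; ring]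
      exact sin_mul_eq_zero h _
    have a3 : Real.sin ((2 * (M : ℝ) + 3) * θ) = 0 := by
      rw [show (2*(M:ℝ)+3) = ((2*(M:ℤ)+3 : ℤ) : ℝ) by push_cast; ring]
      exact sin_mul_eq_zero h _
    rw [a1, a2, a3]; ring
  · have h1 := chebU_sin (M + 1) θ
    have h2 := chebU_sin M θ
    push_cast at h1
    rw [show ((M:ℝ)+1+1)*θ = ((M:ℝ)+2)*θ by ring] at h1
    have key : Real.sin (((M:ℝ) + 2) * θ) ^ 2 - Real.sin (((M:ℝ) + 1) * θ) ^ 2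
        = Real.sin ((2 * (M:ℝ) + 3) * θ) * Real.sin θ := by
      have p2 := Real.sin_sq_add_cos_sq θ
      rw [show ((M:ℝ)+2)*θ = ((M:ℝ)+1)*θ + θ by ring,
        show (2*(M:ℝ)+3)*θ = (((M:ℝ)+1)*θ + θ) + ((M:ℝ)+1)*θ by ring,
        ]
      simp only [Real.sin_add, Real.cos_add]
      linear_combination (Real.sin (((M:ℝ)+1)*θ))^2 * p2
    apply mul_right_cancel₀ h
    linear_combination Real.sin (((M:ℝ)+2)*θ) * h1 - Real.sin (((M:ℝ)+1)*θ) * h2 + key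

lemma sum_form (M : ℕ) (θ : ℝ) :
    Real.sin (((M : ℝ) + 1) * θ) * chebU M (Real.cos θ)
      = ∑ j ∈ Finset.range (M + 1), Real.sin ((2 * (j : ℝ) + 1) * θ) := by
  induction M with
  | zero => simp [chebU]
  | succ m ih =>
      rw [Finset.sum_range_succ, ← ih]
      have t := telescope m θ
      push_cast
      rw [show ((m:ℝ)+1+1)*θ = ((m:ℝ)+2)*θ by ring,
          show (2*((m:ℝ)+1)+1)*θ = (2*(m:ℝ)+3)*θ by ring]
      linear_combination t

lemma int_cos (m : ℤ) : (∫ x in (-1/2:ℝ)..(1/2), Real.cos (2*π*(m:ℝ)*x))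
    = if m = 0 then 1 else 0 := by
  by_cases hm : m = 0
  · simp [hm]; norm_num
  · rw [if_neg hm]
    have hc : (2*π*(m:ℝ)) ≠ 0 := by
      have h0 : (m:ℝ) ≠ 0 := Int.cast_ne_zero.2 hm
      have := Real.pi_ne_zero
      positivity
    have key := intervalIntegral.integral_comp_mul_left (a := (-1/2:ℝ)) (b := (1/2:ℝ)) Real.cos hc
    simp only [mul_assoc] at key ⊢
    rw [key, integral_cos,
      show 2 * (π * ((m:ℝ) * (1 / 2))) = ((m:ℤ):ℝ)*π by push_cast; ring,
      show 2 * (π * ((m:ℝ) * (-1 / 2))) = ((-m:ℤ):ℝ)*π by push_cast; ring,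
      Real.sin_int_mul_pi, Real.sin_int_mul_pi]
    simp

lemma int_ss (a b : ℕ) : (∫ x in (-1/2:ℝ)..(1/2),
    Real.sin (2*π*(a:ℝ)*x) * Real.sin (2*π*(b:ℝ)*x))
    = if a = b ∧ a ≠ 0 then 1/2 else 0 := by
  have pt : ∀ x : ℝ, Real.sin (2*π*(a:ℝ)*x) * Real.sin (2*π*(b:ℝ)*x)
      = (Real.cos (2*π*((((a:ℤ)-b) : ℤ):ℝ)*x) - Real.cos (2*π*((((a:ℤ)+b) : ℤ):ℝ)*x)) / 2 := by
    intro x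
    have h1 := Real.cos_sub (2*π*(a:ℝ)*x) (2*π*(b:ℝ)*x)
    have h2 := Real.cos_add (2*π*(a:ℝ)*x) (2*π*(b:ℝ)*x)
    rw [show 2*π*((((a:ℤ)-b) : ℤ):ℝ)*x = 2*π*(a:ℝ)*x - 2*π*(b:ℝ)*x by push_cast; ring,
        show 2*π*((((a:ℤ)+b) : ℤ):ℝ)*x = 2*π*(a:ℝ)*x + 2*π*(b:ℝ)*x by push_cast; ring,
        h1, h2]
    ring
  rw [intervalIntegral.integral_congr (g := fun x =>
      (Real.cos (2*π*((((a:ℤ)-b) : ℤ):ℝ)*x) - Real.cos (2*π*((((a:ℤ)+b) : ℤ):ℝ)*x)) / 2)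
      (fun x _ => pt x)]
  have i1 : IntervalIntegrable (fun x => Real.cos (2*π*((((a:ℤ)-b) : ℤ):ℝ)*x)) MeasureTheory.volume (-1/2:ℝ) (1/2) := by
    apply Continuous.intervalIntegrable; fun_prop
  have i2 : IntervalIntegrable (fun x => Real.cos (2*π*((((a:ℤ)+b) : ℤ):ℝ)*x)) MeasureTheory.volume (-1/2:ℝ) (1/2) := by
    apply Continuous.intervalIntegrable; fun_prop
  rw [intervalIntegral.integral_div, intervalIntegral.integral_sub i1 i2,
      int_cos, int_cos]
  by_cases hab : a = b
  · subst hab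
    by_cases ha : a = 0
    · subst ha; norm_num
    · have h1 : ((a:ℤ) - a) = 0 := by ring
      have h2 : ((a:ℤ) + a) ≠ 0 := by omega
      rw [if_pos h1, if_neg h2, if_pos ⟨rfl, ha⟩]; norm_num
  · have h1 : ((a:ℤ) - b) ≠ 0 := by omega
    have h2 : ((a:ℤ) + b) ≠ 0 ∨ ((a:ℤ)+b) = 0 := by omega
    have h3 : ¬ (a = b ∧ a ≠ 0) := by tauto
    rw [if_neg h1, if_neg h3]
    rcases Nat.eq_zero_or_pos (a+b) with h | h
    · have : a = 0 ∧ b = 0 := by omega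
      exact absurd this.1.symm (by rw [this.1, this.2] at hab; exact absurd rfl hab)
    · have h2' : ((a:ℤ) + b) ≠ 0 := by omega
      rw [if_neg h2']; norm_num

/-- The Fejér kernel `Δ_M(x) = (1/M) (sin(πMx)/sin(πx))²`, extended by continuity
(value `M`) at the points where `sin(πx) = 0`. -/
noncomputable def fejer (M : ℕ) (x : ℝ) : ℝ :=
  if Real.sin (Real.pi * x) = 0 then (M : ℝ)
  else (1 / (M : ℝ)) * (Real.sin (Real.pi * M * x) / Real.sin (Real.pi * x)) ^ 2

/-- `(sin((M+1)πx)/sin(πx))² = (M+1)·Δ_{M+1}(x)`, interpreted by continuity. -/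
theorem stmt3 (n M : ℕ) (hM : 1 ≤ M) :
    (∫ x in (-1/2 : ℝ)..(1/2),
        ((M : ℝ) + 1) * fejer (M + 1) x * chebU n (Real.cos (2 * Real.pi * x)) *
          (Real.sin (2 * Real.pi * x)) ^ 2)
      = if n < M then 1 else if n = M then 1/2 else 0 := by
  have ptwise : ∀ x : ℝ,
      ((M : ℝ) + 1) * fejer (M + 1) x * chebU n (Real.cos (2 * Real.pi * x)) *
          (Real.sin (2 * Real.pi * x)) ^ 2
      = ∑ j ∈ Finset.range (M + 1),
          (Real.sin (2*π*((j+1 : ℕ):ℝ)*x) + Real.sin (2*π*((j : ℕ):ℝ)*x))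
            * Real.sin (2*π*((n+1 : ℕ):ℝ)*x) := by
    intro x
    by_cases h2 : Real.sin (2 * π * x) = 0
    · obtain ⟨k, hk⟩ := Real.sin_eq_zero_iff.1 h2
      have hw : Real.sin (2*π*((n+1 : ℕ):ℝ)*x) = 0 := by
        rw [show 2*π*((n+1 : ℕ):ℝ)*x = ((n+1 : ℕ):ℝ) * (2*π*x) by ring, ← hk,
          show ((n+1 : ℕ):ℝ) * ((k:ℝ)*π) = (((n+1 : ℕ)*k : ℤ):ℝ) * π by push_cast; ring]
        exact Real.sin_int_mul_pi _
      have hw' : Real.sin (2*π*((n:ℝ)+1)*x) = 0 := by push_cast at hw; exact hw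
      simp [h2, hw']
    · have hs : Real.sin (π * x) ≠ 0 := by
        intro h
        apply h2
        rw [show 2*π*x = 2*(π*x) by ring, Real.sin_two_mul, h]; ring
      have hM1 : ((M:ℝ)+1) ≠ 0 := by positivity
      have hcheb := chebU_sin n (2*π*x)
      have hUM := chebU_sin M (π*x)
      have hsum := sum_form M (π*x)
      have htwo : Real.sin (2*π*x) = 2 * Real.sin (π*x) * Real.cos (π*x) := by
        rw [show 2*π*x = 2*(π*x) by ring, Real.sin_two_mul]
      have hterm : ∀ j : ℕ, Real.sin (2*π*((j+1:ℕ):ℝ)*x) + Real.sin (2*π*((j:ℕ):ℝ)*x)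
          = 2 * Real.cos (π*x) * Real.sin ((2*(j:ℝ)+1)*(π*x)) := by
        intro j
        rw [show 2*π*((j+1:ℕ):ℝ)*x = (2*(j:ℝ)+1)*(π*x) + π*x by push_cast; ring,
            show 2*π*((j:ℕ):ℝ)*x = (2*(j:ℝ)+1)*(π*x) - π*x by push_cast; ring,
            Real.sin_add, Real.sin_sub]
        ring
      have hrhs : (∑ j ∈ Finset.range (M + 1),
          (Real.sin (2*π*((j+1 : ℕ):ℝ)*x) + Real.sin (2*π*((j : ℕ):ℝ)*x))
            * Real.sin (2*π*((n+1 : ℕ):ℝ)*x))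
          = 2 * Real.cos (π*x) * (Real.sin (((M:ℝ)+1)*(π*x)) * chebU M (Real.cos (π*x)))
            * Real.sin (2*π*((n+1 : ℕ):ℝ)*x) := by
        rw [hsum, Finset.mul_sum, ← Finset.sum_mul]
        congr 1
        exact Finset.sum_congr rfl (fun j _ => by rw [hterm j])
      rw [hrhs]
      simp only [fejer]
      rw [if_neg hs,
        show π * ((M+1:ℕ):ℝ) * x = ((M:ℝ)+1)*(π*x) by push_cast; ring,
        show 2*π*((n+1:ℕ):ℝ)*x = ((n:ℝ)+1)*(2*π*x) by push_cast; ring]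
      push_cast
      have hUM' : chebU M (Real.cos (π*x)) * Real.sin (π*x) = Real.sin (((M:ℝ)+1)*π*x) := by
        rw [hUM]; ring_nf
      have hcheb' : chebU n (Real.cos (2*π*x)) * Real.sin (2*π*x) = Real.sin (((n:ℝ)+1)*2*π*x) := by
        rw [hcheb]; ring_nf
      rw [show ((M:ℝ)+1)*(π*x) = ((M:ℝ)+1)*π*x by ring,
          show ((n:ℝ)+1)*(2*π*x) = ((n:ℝ)+1)*2*π*x by ring]
      field_simp
      rw [show π * x * 2 = 2*π*x by ring, show 2*π*x*((n:ℝ)+1) = ((n:ℝ)+1)*2*π*x by ring]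
      linear_combination ((-(Real.sin (((M:ℝ)+1)*π*x) * chebU n (Real.cos (2*π*x)) * Real.sin (2*π*x)^2)) * hUM'
        + (chebU M (Real.cos (π*x)) * Real.sin (π*x) * Real.sin (((M:ℝ)+1)*π*x) * Real.sin (2*π*x)) * hcheb'
        + (chebU M (Real.cos (π*x)) * Real.sin (π*x) * Real.sin (((M:ℝ)+1)*π*x) * Real.sin (((n:ℝ)+1)*2*π*x)) * htwo)
  rw [intervalIntegral.integral_congr (fun x _ => ptwise x)]
  have integ : ∀ (a : ℕ), IntervalIntegrable
      (fun x => Real.sin (2*π*(a:ℝ)*x)) MeasureTheory.volume (-1/2:ℝ) (1/2) := by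
    intro a; apply Continuous.intervalIntegrable; fun_prop
  rw [intervalIntegral.integral_finset_sum (fun j _ => by
    apply Continuous.intervalIntegrable; fun_prop)]
  have each : ∀ j ∈ Finset.range (M+1),
      (∫ x in (-1/2:ℝ)..(1/2),
        (Real.sin (2*π*((j+1 : ℕ):ℝ)*x) + Real.sin (2*π*((j : ℕ):ℝ)*x))
          * Real.sin (2*π*((n+1 : ℕ):ℝ)*x))
      = (if j = n then (1:ℝ)/2 else 0) + (if j = n + 1 then (1:ℝ)/2 else 0) := by
    intro j _
    have pe : ∀ x : ℝ, (Real.sin (2*π*((j+1 : ℕ):ℝ)*x) + Real.sin (2*π*((j : ℕ):ℝ)*x))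
          * Real.sin (2*π*((n+1 : ℕ):ℝ)*x)
        = Real.sin (2*π*((j+1 : ℕ):ℝ)*x) * Real.sin (2*π*((n+1 : ℕ):ℝ)*x)
          + Real.sin (2*π*((j : ℕ):ℝ)*x) * Real.sin (2*π*((n+1 : ℕ):ℝ)*x) := fun x => by ring
    rw [intervalIntegral.integral_congr (fun x _ => pe x),
      intervalIntegral.integral_add (by apply Continuous.intervalIntegrable; fun_prop)
        (by apply Continuous.intervalIntegrable; fun_prop),
      int_ss, int_ss]
    congr 1
    · apply if_congr _ rfl rfl; constructor
      · rintro ⟨h, -⟩; omega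
      · rintro rfl; exact ⟨rfl, by omega⟩
    · apply if_congr _ rfl rfl; constructor
      · rintro ⟨h, -⟩; omega
      · rintro rfl; exact ⟨rfl, by omega⟩
  rw [Finset.sum_congr rfl each, Finset.sum_add_distrib,
    Finset.sum_ite_eq' (Finset.range (M+1)) n (fun _ => (1:ℝ)/2),
    Finset.sum_ite_eq' (Finset.range (M+1)) (n+1) (fun _ => (1:ℝ)/2)]
  simp only [Finset.mem_range]
  split_ifs <;> first | omega | norm_num
end

section
/- Let β ∈ ℝ, M ≥ 1 an integer, and n ∈ {M−1, M}. Then (M+1) ∫_{-1/2}^{1/2} Δ_{M+1}(x−β) · U_n(cos 2πx) · sin²(2πx) dx = ((M−n+1)/2)·cos(2πnβ). -/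
set_option maxHeartbeats 1000000

open Real intervalIntegral

open Finset

lemma cos_mul_cos' (A B : ℝ) : Real.cos A * Real.cos B = (Real.cos (A+B) + Real.cos (A-B))/2 := by
  rw [Real.cos_add, Real.cos_sub]; ring

lemma sin_mul_sin' (A B : ℝ) : Real.sin A * Real.sin B = (Real.cos (A-B) - Real.cos (A+B))/2 := by
  rw [Real.cos_add, Real.cos_sub]; ring

lemma chebU_cos_mul_sin (n : ℕ) (θ : ℝ) :
    chebU n (Real.cos θ) * Real.sin θ = Real.sin (((n:ℝ)+1) * θ) := by
  induction n using Nat.twoStepInduction with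
  | zero => simp [chebU]
  | one => rw [chebU]; push_cast; rw [show ((1:ℝ)+1)*θ = θ + θ by ring, Real.sin_add]; ring
  | more n ih2 ih1 =>
      rw [chebU]
      push_cast
      push_cast at ih1 ih2
      rw [show ((n:ℝ)+2+1)*θ = ((n:ℝ)+1+1)*θ + θ by ring, Real.sin_add,
        show ((n:ℝ)+1)*θ = ((n:ℝ)+1+1)*θ - θ by ring] at *
      rw [Real.sin_sub] at ih2
      linear_combination 2*Real.cos θ*ih1 - ih2

lemma sum_cos_mul_sin (M : ℕ) (θ : ℝ) :
    (∑ k ∈ Finset.range (M+1), Real.cos ((2*(k:ℝ) - M) * θ)) * Real.sin θ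
      = Real.sin (((M:ℝ)+1) * θ) := by
  set f : ℕ → ℝ := fun k => Real.sin ((2*(k:ℝ) - M - 1) * θ) with hf
  have key : ∀ k ∈ Finset.range (M+1), Real.cos ((2*(k:ℝ) - M) * θ) * Real.sin θ
      = (f (k+1) - f k)/2 := by
    intro k _
    simp only [hf]
    push_cast
    rw [show (2*((k:ℝ)+1) - M - 1) * θ = (2*(k:ℝ) - M)*θ + θ by ring,
      show (2*(k:ℝ) - M - 1) * θ = (2*(k:ℝ) - M)*θ - θ by ring, Real.sin_add, Real.sin_sub]
    ring
  rw [Finset.sum_mul, Finset.sum_congr rfl key, ← Finset.sum_div, Finset.sum_range_sub f]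
  simp only [hf]
  push_cast
  rw [show (2*(0:ℝ) - M - 1) * θ = -(((M:ℝ)+1)*θ) by ring, Real.sin_neg]
  rw [show (2*((M:ℝ)+1) - M - 1) * θ = ((M:ℝ)+1)*θ by ring]
  ring

lemma fejer_eq (M : ℕ) (y : ℝ) :
    ((M:ℝ)+1) * fejer (M+1) y
      = (∑ k ∈ Finset.range (M+1), Real.cos ((2*(k:ℝ) - M) * (Real.pi * y)))^2 := by
  unfold fejer
  by_cases h : Real.sin (Real.pi * y) = 0
  · rw [if_pos h]
    obtain ⟨j, hj⟩ := Real.sin_eq_zero_iff.mp h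
    have hy : y = j := by
      have h2 : Real.pi * y = Real.pi * (j:ℝ) := by linarith [hj]
      exact (mul_left_cancel₀ Real.pi_ne_zero h2)
    subst hy
    have hterm : ∀ k ∈ Finset.range (M+1),
        Real.cos ((2*(k:ℝ) - M) * (Real.pi * j)) = Real.cos ((-(M*j) : ℤ) * Real.pi) := by
      intro k _
      rw [show (2*(k:ℝ) - M) * (Real.pi * (j:ℝ)) = ((-(M*j):ℤ):ℝ)*Real.pi + ((k*j : ℤ):ℝ) * (2*Real.pi) by push_cast; ring]
      exact Real.cos_add_int_mul_two_pi _ _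
    rw [Finset.sum_congr rfl hterm, Finset.sum_const, Finset.card_range]
    have hc : Real.cos ((-(M*j) : ℤ) * Real.pi) ^ 2 = 1 := by
      have h0 := Real.sin_sq_add_cos_sq (((-(M*j) : ℤ)) * Real.pi)
      rw [Real.sin_int_mul_pi] at h0
      nlinarith [h0]
    rw [nsmul_eq_mul]
    push_cast
    push_cast at hc
    nlinarith [hc]
  · rw [if_neg h]
    have hs := sum_cos_mul_sin M (Real.pi * y)
    have harg : Real.pi * ((M+1 : ℕ) : ℝ) * y = ((M:ℝ)+1) * (Real.pi * y) := by push_cast; ring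
    rw [harg, ← hs, mul_div_assoc, div_self h, mul_one]
    push_cast
    field_simp
    congr 1
    refine Finset.sum_congr rfl fun k _ => ?_
    congr 1
    ring

lemma integral_cos_freq (j : ℤ) (c : ℝ) :
    ∫ x in (-1/2:ℝ)..(1/2), Real.cos (2*Real.pi*j*x + c)
      = if j = 0 then Real.cos c else 0 := by
  rcases eq_or_ne j 0 with h | h
  · simp [h]; norm_num
  · rw [if_neg h]
    have ha : (2*Real.pi*(j:ℝ)) ≠ 0 := by
      simp [Real.pi_ne_zero, h]
    have hderiv : ∀ x ∈ Set.uIcc (-1/2:ℝ) (1/2),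
        HasDerivAt (fun x => Real.sin (2*Real.pi*j*x + c) / (2*Real.pi*j))
          (Real.cos (2*Real.pi*j*x + c)) x := by
      intro x _
      have h1 : HasDerivAt (fun x : ℝ => 2*Real.pi*j*x + c) (2*Real.pi*j) x := by
        simpa using ((hasDerivAt_id x).const_mul (2*Real.pi*(j:ℝ))).add_const c
      have h2 := (h1.sin).div_const (2*Real.pi*(j:ℝ))
      rw [mul_div_assoc, div_self ha, mul_one] at h2
      exact h2
    rw [intervalIntegral.integral_eq_sub_of_hasDerivAt hderiv
      (Continuous.intervalIntegrable (by continuity) _ _)]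
    have e1 : 2*Real.pi*(j:ℝ)*(1/2) + c = c + (j:ℝ)*Real.pi := by ring
    have e2 : 2*Real.pi*(j:ℝ)*(-1/2) + c = c - (j:ℝ)*Real.pi := by ring
    rw [e1, e2, Real.sin_add, Real.sin_sub, Real.sin_int_mul_pi]
    ring

lemma integral_cos_cos (a m : ℤ) (β : ℝ) :
    ∫ x in (-1/2:ℝ)..(1/2), Real.cos (2*Real.pi*(a:ℝ)*(x-β)) * Real.cos (2*Real.pi*(m:ℝ)*x)
      = ((if a = -m then (1:ℝ) else 0) + (if a = m then 1 else 0))/2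
          * Real.cos (2*Real.pi*(m:ℝ)*β) := by
  have hpt : ∀ x : ℝ, Real.cos (2*Real.pi*(a:ℝ)*(x-β)) * Real.cos (2*Real.pi*(m:ℝ)*x)
      = (Real.cos (2*Real.pi*((a+m:ℤ):ℝ)*x + (-(2*Real.pi*(a:ℝ)*β)))
        + Real.cos (2*Real.pi*((a-m:ℤ):ℝ)*x + (-(2*Real.pi*(a:ℝ)*β))))/2 := by
    intro x
    push_cast
    rw [show 2*Real.pi*(a:ℝ)*(x-β) = 2*Real.pi*(a:ℝ)*x - 2*Real.pi*(a:ℝ)*β by ring,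
        show 2*Real.pi*((a:ℝ)+(m:ℝ))*x + -(2*Real.pi*(a:ℝ)*β)
          = (2*Real.pi*(a:ℝ)*x - 2*Real.pi*(a:ℝ)*β) + 2*Real.pi*(m:ℝ)*x by ring,
        show 2*Real.pi*((a:ℝ)-(m:ℝ))*x + -(2*Real.pi*(a:ℝ)*β)
          = (2*Real.pi*(a:ℝ)*x - 2*Real.pi*(a:ℝ)*β) - 2*Real.pi*(m:ℝ)*x by ring]
    simp only [Real.cos_add, Real.cos_sub, Real.sin_add, Real.sin_sub]
    ring
  simp only [hpt]
  rw [intervalIntegral.integral_div]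
  rw [intervalIntegral.integral_add
    (Continuous.intervalIntegrable (by continuity) _ _)
    (Continuous.intervalIntegrable (by continuity) _ _),
    integral_cos_freq, integral_cos_freq]
  have hc : Real.cos (-(2*Real.pi*(a:ℝ)*β)) = Real.cos (2*Real.pi*(a:ℝ)*β) := Real.cos_neg _
  rcases eq_or_ne a (-m) with h1 | h1 <;> rcases eq_or_ne a m with h2 | h2
  · have hm : m = 0 := by omega
    subst hm
    simp at h1 h2
    subst h1
    norm_num
  · rw [if_pos, if_neg, if_pos h1, if_neg h2, hc]
    · subst h1; push_cast; rw [show 2*Real.pi*(-(m:ℝ))*β = -(2*Real.pi*(m:ℝ)*β) by ring, Real.cos_neg]; ring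
    · omega
    · omega
  · rw [if_neg, if_pos, if_neg h1, if_pos h2, hc]
    · subst h2; ring
    · omega
    · omega
  · rw [if_neg, if_neg, if_neg h1, if_neg h2]
    · norm_num
    · omega
    · omega

lemma integral_comb (a b m m' : ℤ) (β : ℝ) :
    ∫ x in (-1/2:ℝ)..(1/2), (1/4:ℝ) *
        ( Real.cos (2*Real.pi*(a:ℝ)*(x-β)) * Real.cos (2*Real.pi*(m:ℝ)*x)
        + Real.cos (2*Real.pi*(b:ℝ)*(x-β)) * Real.cos (2*Real.pi*(m:ℝ)*x)
        - Real.cos (2*Real.pi*(a:ℝ)*(x-β)) * Real.cos (2*Real.pi*(m':ℝ)*x)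
        - Real.cos (2*Real.pi*(b:ℝ)*(x-β)) * Real.cos (2*Real.pi*(m':ℝ)*x) )
      = (1/8) * (((if a = -m then (1:ℝ) else 0) + (if a = m then 1 else 0))
          + ((if b = -m then (1:ℝ) else 0) + (if b = m then 1 else 0))) * Real.cos (2*Real.pi*(m:ℝ)*β)
        - (1/8) * (((if a = -m' then (1:ℝ) else 0) + (if a = m' then 1 else 0))
          + ((if b = -m' then (1:ℝ) else 0) + (if b = m' then 1 else 0))) * Real.cos (2*Real.pi*(m':ℝ)*β) := by
  have hcc : ∀ (a m : ℤ), IntervalIntegrable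
      (fun x : ℝ => Real.cos (2*Real.pi*(a:ℝ)*(x-β)) * Real.cos (2*Real.pi*(m:ℝ)*x))
      MeasureTheory.volume (-1/2:ℝ) (1/2) := by
    intro a m
    exact Continuous.intervalIntegrable (by fun_prop) _ _
  rw [intervalIntegral.integral_const_mul]
  rw [intervalIntegral.integral_sub (((hcc a m).add (hcc b m)).sub (hcc a m')) (hcc b m')]
  rw [intervalIntegral.integral_sub ((hcc a m).add (hcc b m)) (hcc a m')]
  rw [intervalIntegral.integral_add (hcc a m) (hcc b m)]
  rw [integral_cos_cos a m β, integral_cos_cos b m β, integral_cos_cos a m' β, integral_cos_cos b m' β]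
  ring

lemma ptterm (M n k l : ℕ) (β x : ℝ) :
    Real.cos ((2*(k:ℝ) - M) * (Real.pi * (x - β))) * Real.cos ((2*(l:ℝ) - M) * (Real.pi * (x - β)))
      * (Real.sin (((n:ℝ)+1) * (2*Real.pi*x)) * Real.sin (2*Real.pi*x))
    = (1/4) * ( Real.cos (2*Real.pi*((((k:ℤ)+l-M):ℤ):ℝ)*(x-β)) * Real.cos (2*Real.pi*((n:ℤ):ℝ)*x)
        + Real.cos (2*Real.pi*((((k:ℤ)-l):ℤ):ℝ)*(x-β)) * Real.cos (2*Real.pi*((n:ℤ):ℝ)*x)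
        - Real.cos (2*Real.pi*((((k:ℤ)+l-M):ℤ):ℝ)*(x-β)) * Real.cos (2*Real.pi*(((n:ℤ)+2 : ℤ):ℝ)*x)
        - Real.cos (2*Real.pi*((((k:ℤ)-l):ℤ):ℝ)*(x-β)) * Real.cos (2*Real.pi*(((n:ℤ)+2 : ℤ):ℝ)*x) ) := by
  rw [cos_mul_cos', sin_mul_sin',
    show (2*(k:ℝ) - M) * (Real.pi * (x - β)) + (2*(l:ℝ) - M) * (Real.pi * (x - β))
      = 2*Real.pi*((((k:ℤ)+l-M):ℤ):ℝ)*(x-β) by push_cast; ring,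
    show (2*(k:ℝ) - M) * (Real.pi * (x - β)) - (2*(l:ℝ) - M) * (Real.pi * (x - β))
      = 2*Real.pi*((((k:ℤ)-l):ℤ):ℝ)*(x-β) by push_cast; ring,
    show ((n:ℝ)+1) * (2*Real.pi*x) - 2*Real.pi*x = 2*Real.pi*((n:ℤ):ℝ)*x by push_cast; ring,
    show ((n:ℝ)+1) * (2*Real.pi*x) + 2*Real.pi*x = 2*Real.pi*(((n:ℤ)+2 : ℤ):ℝ)*x by push_cast; ring]
  ring

theorem stmt8 (β : ℝ) (M : ℕ) (hM : 1 ≤ M) (n : ℕ) (hn : n + 1 = M ∨ n = M) :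
    ((M : ℝ) + 1) * ∫ x in (-1/2 : ℝ)..(1/2),
        fejer (M + 1) (x - β) * chebU n (Real.cos (2 * Real.pi * x)) *
          (Real.sin (2 * Real.pi * x)) ^ 2
      = (((M : ℝ) - n + 1) / 2) * Real.cos (2 * Real.pi * n * β) := by
  set s : Finset (ℕ × ℕ) := Finset.range (M+1) ×ˢ Finset.range (M+1) with hs
  set F : ℕ × ℕ → ℝ → ℝ := fun p x =>
    (1/4) * ( Real.cos (2*Real.pi*((((p.1:ℤ)+p.2-M):ℤ):ℝ)*(x-β)) * Real.cos (2*Real.pi*((n:ℤ):ℝ)*x)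
        + Real.cos (2*Real.pi*((((p.1:ℤ)-p.2):ℤ):ℝ)*(x-β)) * Real.cos (2*Real.pi*((n:ℤ):ℝ)*x)
        - Real.cos (2*Real.pi*((((p.1:ℤ)+p.2-M):ℤ):ℝ)*(x-β)) * Real.cos (2*Real.pi*(((n:ℤ)+2 : ℤ):ℝ)*x)
        - Real.cos (2*Real.pi*((((p.1:ℤ)-p.2):ℤ):ℝ)*(x-β)) * Real.cos (2*Real.pi*(((n:ℤ)+2 : ℤ):ℝ)*x) ) with hF
  have hpt : ∀ x : ℝ, ((M:ℝ)+1) * (fejer (M + 1) (x - β) * chebU n (Real.cos (2 * Real.pi * x)) *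
          (Real.sin (2 * Real.pi * x)) ^ 2) = ∑ p ∈ s, F p x := by
    intro x
    have h2 : chebU n (Real.cos (2 * Real.pi * x)) * (Real.sin (2 * Real.pi * x)) ^ 2
        = Real.sin (((n:ℝ)+1) * (2*Real.pi*x)) * Real.sin (2*Real.pi*x) := by
      rw [pow_two, ← mul_assoc, chebU_cos_mul_sin]
    calc ((M:ℝ)+1) * (fejer (M + 1) (x - β) * chebU n (Real.cos (2 * Real.pi * x)) *
          (Real.sin (2 * Real.pi * x)) ^ 2)
        = (((M:ℝ)+1) * fejer (M+1) (x-β)) * (chebU n (Real.cos (2 * Real.pi * x)) *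
            (Real.sin (2 * Real.pi * x)) ^ 2) := by ring
      _ = (∑ k ∈ Finset.range (M+1), Real.cos ((2*(k:ℝ) - M) * (Real.pi * (x-β))))^2
            * (Real.sin (((n:ℝ)+1) * (2*Real.pi*x)) * Real.sin (2*Real.pi*x)) := by
          rw [fejer_eq, h2]
      _ = ∑ k ∈ Finset.range (M+1), ∑ l ∈ Finset.range (M+1), F (k, l) x := by
          rw [pow_two, Finset.sum_mul_sum, Finset.sum_mul]
          refine Finset.sum_congr rfl fun k _ => ?_
          rw [Finset.sum_mul]
          refine Finset.sum_congr rfl fun l _ => ?_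
          simp only [hF]
          exact ptterm M n k l β x
      _ = ∑ p ∈ s, F p x := by rw [hs, Finset.sum_product]
  calc ((M : ℝ) + 1) * ∫ x in (-1/2 : ℝ)..(1/2),
        fejer (M + 1) (x - β) * chebU n (Real.cos (2 * Real.pi * x)) *
          (Real.sin (2 * Real.pi * x)) ^ 2
      = ∫ x in (-1/2 : ℝ)..(1/2), ((M:ℝ)+1) * (fejer (M + 1) (x - β) * chebU n (Real.cos (2 * Real.pi * x)) *
          (Real.sin (2 * Real.pi * x)) ^ 2) := (intervalIntegral.integral_const_mul _ _).symm
    _ = ∫ x in (-1/2 : ℝ)..(1/2), ∑ p ∈ s, F p x :=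
        intervalIntegral.integral_congr (fun x _ => hpt x)
    _ = ∑ p ∈ s, ∫ x in (-1/2 : ℝ)..(1/2), F p x :=
        intervalIntegral.integral_finset_sum (fun p _ =>
          Continuous.intervalIntegrable (by fun_prop) _ _)
    _ = ∑ p ∈ s, ((1/8) * (((if ((p.1:ℤ)+p.2-M) = -(n:ℤ) then (1:ℝ) else 0) + (if ((p.1:ℤ)+p.2-M) = (n:ℤ) then 1 else 0))
          + ((if ((p.1:ℤ)-p.2) = -(n:ℤ) then (1:ℝ) else 0) + (if ((p.1:ℤ)-p.2) = (n:ℤ) then 1 else 0))) * Real.cos (2*Real.pi*((n:ℤ):ℝ)*β)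
        - (1/8) * (((if ((p.1:ℤ)+p.2-M) = -((n:ℤ)+2) then (1:ℝ) else 0) + (if ((p.1:ℤ)+p.2-M) = ((n:ℤ)+2) then 1 else 0))
          + ((if ((p.1:ℤ)-p.2) = -((n:ℤ)+2) then (1:ℝ) else 0) + (if ((p.1:ℤ)-p.2) = ((n:ℤ)+2) then 1 else 0))) * Real.cos (2*Real.pi*(((n:ℤ)+2 : ℤ):ℝ)*β)) :=
        Finset.sum_congr rfl (fun p _ => by
          simp only [hF]
          exact integral_comb ((p.1:ℤ)+p.2-M) ((p.1:ℤ)-p.2) (n:ℤ) ((n:ℤ)+2) β)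
    _ = (((M : ℝ) - n + 1) / 2) * Real.cos (2 * Real.pi * n * β) := by
        simp only [Finset.sum_sub_distrib, Finset.sum_add_distrib, ← Finset.sum_mul, ← Finset.mul_sum, Finset.sum_boole]
        rcases hn with h | h
        · -- n + 1 = M
          subst h
          have c1 : (s.filter (fun x : ℕ × ℕ => (x.1:ℤ) + x.2 - (n+1 : ℕ) = -(n:ℤ))) = {(0, 1), (1, 0)} := by
            ext ⟨k, l⟩
            simp only [hs, Finset.mem_filter, Finset.mem_product, Finset.mem_range,
              Finset.mem_insert, Finset.mem_singleton, Prod.mk.injEq]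
            omega
          have c2 : (s.filter (fun x : ℕ × ℕ => (x.1:ℤ) + x.2 - (n+1 : ℕ) = (n:ℤ))) = {(n, n+1), (n+1, n)} := by
            ext ⟨k, l⟩
            simp only [hs, Finset.mem_filter, Finset.mem_product, Finset.mem_range,
              Finset.mem_insert, Finset.mem_singleton, Prod.mk.injEq]
            omega
          have c3 : (s.filter (fun x : ℕ × ℕ => (x.1:ℤ) - x.2 = -(n:ℤ))) = {(0, n), (1, n+1)} := by
            ext ⟨k, l⟩
            simp only [hs, Finset.mem_filter, Finset.mem_product, Finset.mem_range,
              Finset.mem_insert, Finset.mem_singleton, Prod.mk.injEq]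
            omega
          have c4 : (s.filter (fun x : ℕ × ℕ => (x.1:ℤ) - x.2 = (n:ℤ))) = {(n, 0), (n+1, 1)} := by
            ext ⟨k, l⟩
            simp only [hs, Finset.mem_filter, Finset.mem_product, Finset.mem_range,
              Finset.mem_insert, Finset.mem_singleton, Prod.mk.injEq]
            omega
          have c5 : (s.filter (fun x : ℕ × ℕ => (x.1:ℤ) + x.2 - (n+1 : ℕ) = -((n:ℤ)+2))) = ∅ := by
            ext ⟨k, l⟩
            simp only [hs, Finset.mem_filter, Finset.mem_product, Finset.mem_range,
              Finset.notMem_empty, iff_false, not_and]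
            omega
          have c6 : (s.filter (fun x : ℕ × ℕ => (x.1:ℤ) + x.2 - (n+1 : ℕ) = (n:ℤ)+2)) = ∅ := by
            ext ⟨k, l⟩
            simp only [hs, Finset.mem_filter, Finset.mem_product, Finset.mem_range,
              Finset.notMem_empty, iff_false, not_and]
            omega
          have c7 : (s.filter (fun x : ℕ × ℕ => (x.1:ℤ) - x.2 = -((n:ℤ)+2))) = ∅ := by
            ext ⟨k, l⟩
            simp only [hs, Finset.mem_filter, Finset.mem_product, Finset.mem_range,
              Finset.notMem_empty, iff_false, not_and]
            omega
          have c8 : (s.filter (fun x : ℕ × ℕ => (x.1:ℤ) - x.2 = (n:ℤ)+2)) = ∅ := by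
            ext ⟨k, l⟩
            simp only [hs, Finset.mem_filter, Finset.mem_product, Finset.mem_range,
              Finset.notMem_empty, iff_false, not_and]
            omega
          rw [c1, c2, c3, c4, c5, c6, c7, c8]
          have d1 : ({(0, 1), (1, 0)} : Finset (ℕ × ℕ)).card = 2 := by decide
          have d2 : ({(n, n+1), (n+1, n)} : Finset (ℕ × ℕ)).card = 2 := by
            rw [Finset.card_insert_of_notMem (by simp), Finset.card_singleton]
          have d3 : ({(0, n), (1, n+1)} : Finset (ℕ × ℕ)).card = 2 := by
            rw [Finset.card_insert_of_notMem (by simp), Finset.card_singleton]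
          have d4 : ({(n, 0), (n+1, 1)} : Finset (ℕ × ℕ)).card = 2 := by
            rw [Finset.card_insert_of_notMem (by simp), Finset.card_singleton]
          rw [d1, d2, d3, d4]
          simp only [Finset.card_empty]
          push_cast
          ring
        · -- n = M
          subst h
          have c1 : (s.filter (fun x : ℕ × ℕ => (x.1:ℤ) + x.2 - (n : ℕ) = -(n:ℤ))) = {((0:ℕ), (0:ℕ))} := by
            ext ⟨k, l⟩
            simp only [hs, Finset.mem_filter, Finset.mem_product, Finset.mem_range,
              Finset.mem_singleton, Prod.mk.injEq]
            omega
          have c2 : (s.filter (fun x : ℕ × ℕ => (x.1:ℤ) + x.2 - (n : ℕ) = (n:ℤ))) = {(n, n)} := by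
            ext ⟨k, l⟩
            simp only [hs, Finset.mem_filter, Finset.mem_product, Finset.mem_range,
              Finset.mem_singleton, Prod.mk.injEq]
            omega
          have c3 : (s.filter (fun x : ℕ × ℕ => (x.1:ℤ) - x.2 = -(n:ℤ))) = {((0:ℕ), n)} := by
            ext ⟨k, l⟩
            simp only [hs, Finset.mem_filter, Finset.mem_product, Finset.mem_range,
              Finset.mem_singleton, Prod.mk.injEq]
            omega
          have c4 : (s.filter (fun x : ℕ × ℕ => (x.1:ℤ) - x.2 = (n:ℤ))) = {(n, (0:ℕ))} := by
            ext ⟨k, l⟩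
            simp only [hs, Finset.mem_filter, Finset.mem_product, Finset.mem_range,
              Finset.mem_singleton, Prod.mk.injEq]
            omega
          have c5 : (s.filter (fun x : ℕ × ℕ => (x.1:ℤ) + x.2 - (n : ℕ) = -((n:ℤ)+2))) = ∅ := by
            ext ⟨k, l⟩
            simp only [hs, Finset.mem_filter, Finset.mem_product, Finset.mem_range,
              Finset.notMem_empty, iff_false, not_and]
            omega
          have c6 : (s.filter (fun x : ℕ × ℕ => (x.1:ℤ) + x.2 - (n : ℕ) = (n:ℤ)+2)) = ∅ := by
            ext ⟨k, l⟩
            simp only [hs, Finset.mem_filter, Finset.mem_product, Finset.mem_range,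
              Finset.notMem_empty, iff_false, not_and]
            omega
          have c7 : (s.filter (fun x : ℕ × ℕ => (x.1:ℤ) - x.2 = -((n:ℤ)+2))) = ∅ := by
            ext ⟨k, l⟩
            simp only [hs, Finset.mem_filter, Finset.mem_product, Finset.mem_range,
              Finset.notMem_empty, iff_false, not_and]
            omega
          have c8 : (s.filter (fun x : ℕ × ℕ => (x.1:ℤ) - x.2 = (n:ℤ)+2)) = ∅ := by
            ext ⟨k, l⟩
            simp only [hs, Finset.mem_filter, Finset.mem_product, Finset.mem_range,
              Finset.notMem_empty, iff_false, not_and]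
            omega
          rw [c1, c2, c3, c4, c5, c6, c7, c8]
          simp only [Finset.card_singleton, Finset.card_empty]
          push_cast
          ring
end
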